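/- Say a group G is NNF if G has no normal subgroup N such that N is a nonabelian free group (i.e., N satisfies IsFreeGroup and N is not commutative). If G and H are both NNF, then the direct product G × H is NNF: every normal subgroup of G × H which is a free group is commutative. -/

import Mathlib

/-- A group is `NNF` if it has no normal subgroup which is a nonabelian free group,
i.e. every normal subgroup which is a free group is commutative. -/
def NNF (G : Type*) [Group G] : Prop :=
  ∀ N : Subgroup G, N.Normal → IsFreeGroup N → ∀ a b : N, a * b = b * a

open scoped commutatorElement

private lemma NNF.freeGroup_witness :
    (⁅⁅FreeGroup.of false, FreeGroup.of true⁆,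
      ⁅FreeGroup.of false, (FreeGroup.of true) ^ 2⁆⁆ : FreeGroup Bool) ≠ 1 := by
  decide

private lemma NNF.subsingleton_comm {ι : Type*} [Subsingleton ι] (x y : FreeGroup ι) :
    x * y = y * x := by
  suffices h : ∀ z : FreeGroup ι, ∀ w : FreeGroup ι, Commute z w from h x y
  intro z
  induction z using FreeGroup.induction_on with
  | C1 => exact fun w => Commute.one_left w
  | of i =>
    intro w
    induction w using FreeGroup.induction_on with
    | C1 => exact Commute.one_right _
    | of j => rw [Subsingleton.elim i j]
    | inv_of j h => exact h.inv_right
    | mul u v hu hv => exact hu.mul_right hv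
  | inv_of i h => exact fun w => (h w).inv_left
  | mul u v hu hv => exact fun w => (hu w).mul_left (hv w)

/-- Key step: in a free normal subgroup of `G × H` with `G` `NNF`,
elements supported on the first factor pairwise commute. -/
private lemma NNF.left_comm {G H : Type*} [Group G] [Group H] (hG : NNF G)
    (N : Subgroup (G × H)) (hN : N.Normal) (hF : IsFreeGroup N)
    {x x' : G} (hx : ((x, 1) : G × H) ∈ N) (hx' : ((x', 1) : G × H) ∈ N) :
    x * x' = x' * x := by
  set N₁ : Subgroup G := N.comap (MonoidHom.inl G H) with hN₁
  have hN₁norm : N₁.Normal := by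
    constructor
    intro n hn g
    have h2 : ((g * n * g⁻¹, 1) : G × H) = (g, 1) * (n, 1) * (g, 1)⁻¹ := by
      simp [Prod.ext_iff]
    show ((g * n * g⁻¹, 1) : G × H) ∈ N
    rw [h2]
    exact hN.conj_mem _ hn _
  -- `N₁` is isomorphic to a subgroup of the free group `N`, hence free
  let ψ : N₁ →* N :=
    { toFun := fun a => ⟨((a : G), 1), a.2⟩
      map_one' := rfl
      map_mul' := by intro a b; ext <;> simp }
  have hψinj : Function.Injective ψ := by
    intro a b hab
    have h1 : (((a : G), (1 : H)) : G × H) = ((b : G), 1) := congrArg Subtype.val hab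
    ext
    exact ((Prod.mk.injEq _ _ _ _).mp h1).1
  have hfree₁ : IsFreeGroup N₁ :=
    IsFreeGroup.ofMulEquiv (MonoidHom.ofInjective hψinj).symm
  have := hG N₁ hN₁norm hfree₁ ⟨x, hx⟩ ⟨x', hx'⟩
  simpa [Subtype.ext_iff] using this

private lemma NNF.commutators_commute {G H : Type*} [Group G] [Group H]
    (hG : NNF G) (hH : NNF H)
    (N : Subgroup (G × H)) (hN : N.Normal) (hF : IsFreeGroup N)
    (p q p' q' : G × H) (hp : p ∈ N) (hq : q ∈ N) (hp' : p' ∈ N) (hq' : q' ∈ N) :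
    Commute ⁅p, q⁆ ⁅p', q'⁆ := by
  -- membership of one-sided commutators
  have conj_mem : ∀ r : G × H, r ∈ N → ∀ z : G × H, ⁅r, z⁆ ∈ N := by
    intro r hr z
    have h1 : ⁅r, z⁆ = r * (z * r * z⁻¹)⁻¹ := by group
    rw [h1]
    exact mul_mem hr (inv_mem (hN.conj_mem _ hr _))
  have memG : ∀ r s : G × H, r ∈ N → ((⁅r.1, s.1⁆, 1) : G × H) ∈ N := by
    intro r s hr
    have h1 : ((⁅r.1, s.1⁆, 1) : G × H) = ⁅r, (s.1, 1)⁆ := by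
      simp [commutatorElement_def, Prod.ext_iff]
    rw [h1]; exact conj_mem r hr _
  have memH : ∀ r s : G × H, r ∈ N → (((1 : G), ⁅r.2, s.2⁆) : G × H) ∈ N := by
    intro r s hr
    have h1 : (((1 : G), ⁅r.2, s.2⁆) : G × H) = ⁅r, (1, s.2)⁆ := by
      simp [commutatorElement_def, Prod.ext_iff]
    rw [h1]; exact conj_mem r hr _
  -- commutation on the second factor, by symmetry
  have right_comm : ∀ {y y' : H}, (((1 : G), y) : G × H) ∈ N →
      (((1 : G), y') : G × H) ∈ N → y * y' = y' * y := by
    intro y y' hy hy'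
    let e : (G × H) ≃* (H × G) := MulEquiv.prodComm
    have hMnorm : (N.map e.toMonoidHom).Normal := Subgroup.Normal.map hN _ e.surjective
    have hMfree : IsFreeGroup (N.map e.toMonoidHom) :=
      IsFreeGroup.ofMulEquiv (e.subgroupMap N)
    have hmem : ∀ {z : H}, (((1 : G), z) : G × H) ∈ N → ((z, 1) : H × G) ∈ N.map e.toMonoidHom := by
      intro z hz
      exact ⟨((1 : G), z), hz, rfl⟩
    exact NNF.left_comm hH _ hMnorm hMfree (hmem hy) (hmem hy')
  -- split the commutators into factor parts
  have split : ∀ r s : G × H,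
      ⁅r, s⁆ = ((⁅r.1, s.1⁆, 1) : G × H) * ((1 : G), ⁅r.2, s.2⁆) := by
    intro r s
    simp [commutatorElement_def, Prod.ext_iff]
  rw [split p q, split p' q']
  have cross : ∀ (a : G) (b : H), Commute ((a, 1) : G × H) ((1 : G), b) := by
    intro a b
    simp [Commute, SemiconjBy, Prod.ext_iff]
  have cGG : Commute ((⁅p.1, q.1⁆, 1) : G × H) ((⁅p'.1, q'.1⁆, 1) : G × H) := by
    have := NNF.left_comm hG N hN hF (memG p q hp) (memG p' q' hp')
    simp [Commute, SemiconjBy, Prod.ext_iff, this]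
  have cHH : Commute (((1 : G), ⁅p.2, q.2⁆) : G × H) (((1 : G), ⁅p'.2, q'.2⁆) : G × H) := by
    have := right_comm (memH p q hp) (memH p' q' hp')
    simp [Commute, SemiconjBy, Prod.ext_iff, this]
  exact Commute.mul_right (Commute.mul_left cGG ((cross _ _).symm))
    (Commute.mul_left (cross _ _) cHH)

/-- The class `NNF` is closed under direct products. -/
theorem NNF.prod {G H : Type*} [Group G] [Group H] (hG : NNF G) (hH : NNF H) :
    NNF (G × H) := by
  intro N hN hF a b
  haveI := hF
  -- all commutators in `N` commute with each other
  have key : ∀ c d c' d' : N, Commute ⁅c, d⁆ ⁅c', d'⁆ := by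
    intro c d c' d'
    have h := NNF.commutators_commute hG hH N hN hF c d c' d' c.2 d.2 c'.2 d'.2
    rw [Commute, SemiconjBy] at h ⊢
    apply Subtype.ext
    push_cast [map_commutatorElement]
    exact h
  rcases subsingleton_or_nontrivial (IsFreeGroup.Generators ↥N) with hs | hnt
  · -- free group on at most one generator: abelian
    have := NNF.subsingleton_comm (IsFreeGroup.toFreeGroup ↥N a) (IsFreeGroup.toFreeGroup ↥N b)
    have h2 : IsFreeGroup.toFreeGroup ↥N (a * b) = IsFreeGroup.toFreeGroup ↥N (b * a) := by
      rw [map_mul, map_mul, this]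
    exact (IsFreeGroup.toFreeGroup ↥N).injective h2
  · -- otherwise find two generators and derive a contradiction
    exfalso
    obtain ⟨i, j, hij⟩ := hnt
    set e := IsFreeGroup.toFreeGroup ↥N with he
    set x : ↥N := e.symm (FreeGroup.of i) with hx
    set y : ↥N := e.symm (FreeGroup.of j) with hy
    have hcomm : ⁅⁅x, y⁆, ⁅x, y ^ 2⁆⁆ = (1 : ↥N) := by
      have := key x y x (y ^ 2)
      rwa [← commutatorElement_eq_one_iff_commute] at this
    -- transfer to `FreeGroup (Generators N)`
    have hcomm2 : ⁅⁅FreeGroup.of i, FreeGroup.of j⁆,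
        ⁅FreeGroup.of i, (FreeGroup.of j) ^ 2⁆⁆ = (1 : FreeGroup (IsFreeGroup.Generators ↥N)) := by
      have := congrArg e hcomm
      simpa [map_commutatorElement, hx, hy] using this
    -- push to `FreeGroup Bool`
    haveI := Classical.decEq (IsFreeGroup.Generators ↥N)
    let f : FreeGroup (IsFreeGroup.Generators ↥N) →* FreeGroup Bool :=
      FreeGroup.lift (fun k => if k = i then FreeGroup.of false else FreeGroup.of true)
    have hfi : f (FreeGroup.of i) = FreeGroup.of false := by simp [f]
    have hfj : f (FreeGroup.of j) = FreeGroup.of true := by simp [f, hij.symm]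
    have hcomm3 : ⁅⁅FreeGroup.of false, FreeGroup.of true⁆,
        ⁅FreeGroup.of false, (FreeGroup.of true) ^ 2⁆⁆ = (1 : FreeGroup Bool) := by
      have := congrArg f hcomm2
      simpa [map_commutatorElement, hfi, hfj] using this
    exact NNF.freeGroup_witness hcomm3
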